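/- Let 0 < a < b. For all u = (q, r) ∈ H¹(ℝ) × H¹(ℝ), the integral ∫_ℝ (E(u) + F₂(u)) dx is nonnegative, where E(u) = (1/2)(q² + r² + a(∂ₓq)² + b(∂ₓr)²) and F₂(u) = r·B⁻¹A q + a(∂ₓq)(∂ₓr), with A = I − a∂ₓ², B = I − b∂ₓ² (so B⁻¹A is the Fourier multiplier with symbol (1+aξ²)/(1+bξ²)). -/

import Mathlib

open MeasureTheory Real Set

noncomputable def Kk (s t : ℝ) : ℝ := 1 / (2 * s) * Real.exp (-|t| / s)

lemma Kk_nonneg {s : ℝ} (hs : 0 < s) (t : ℝ) : 0 ≤ Kk s t := by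
  have h := (Real.exp_pos (-|t| / s)).le
  unfold Kk; positivity

lemma Kk_cont {s : ℝ} : Continuous (Kk s) :=
  continuous_const.mul (Real.continuous_exp.comp ((continuous_abs.neg).div_const s))

lemma Kk_le {s : ℝ} (hs : 0 < s) (t : ℝ) : Kk s t ≤ 1 / (2 * s) := by
  have h1 : Real.exp (-|t| / s) ≤ 1 := by
    rw [Real.exp_le_one_iff]
    exact div_nonpos_iff.mpr (Or.inr ⟨neg_nonpos.mpr (abs_nonneg t), hs.le⟩)
  have h2 : (0:ℝ) < 1 / (2 * s) := by positivity
  calc Kk s t = 1 / (2 * s) * Real.exp (-|t| / s) := rfl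
    _ ≤ 1 / (2 * s) * 1 := by exact mul_le_mul_of_nonneg_left h1 h2.le
    _ = 1 / (2 * s) := mul_one _

lemma Kk_integrable {s : ℝ} (hs : 0 < s) : Integrable (Kk s) := by
  have hIoi : IntegrableOn (Kk s) (Ioi 0) := by
    have h : IntegrableOn (fun x => 1 / (2 * s) * Real.exp (-s⁻¹ * x)) (Ioi 0) :=
      (exp_neg_integrableOn_Ioi 0 (b := s⁻¹) (by positivity)).const_mul (1 / (2 * s))
    exact h.congr_fun (fun x hx => by
      simp only [Kk, abs_of_pos (mem_Ioi.mp hx)]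
      ring_nf) measurableSet_Ioi
  have hIic : IntegrableOn (Kk s) (Iic 0) := by
    rw [← Measure.map_neg_eq_self (volume : Measure ℝ)]
    have m : MeasurableEmbedding fun x : ℝ => -x := (Homeomorph.neg ℝ).measurableEmbedding
    rw [m.integrableOn_map_iff]
    simp only [Function.comp_def, neg_preimage, neg_Iic, neg_zero]
    rw [show ((fun x : ℝ => Kk s (-x))) = Kk s from funext fun x => by simp [Kk, abs_neg]]
    exact (Iff.mpr integrableOn_Ici_iff_integrableOn_Ioi hIoi)
  have := hIic.union hIoi
  rwa [Iic_union_Ioi, integrableOn_univ] at this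

lemma Kk_integral {s : ℝ} (hs : 0 < s) : ∫ t, Kk s t = 1 := by
  have habs : ∫ t : ℝ, Kk s t = 2 * ∫ t in Ioi (0:ℝ), 1 / (2 * s) * Real.exp (-t / s) := by
    rw [← integral_comp_abs (f := fun t => 1 / (2 * s) * Real.exp (-t / s))]
    simp only [Kk]
  rw [habs]
  have h2 : ∫ t in Ioi (0:ℝ), 1 / (2 * s) * Real.exp (-t / s)
      = 1 / (2 * s) * ∫ t in Ioi (0:ℝ), Real.exp (-t / s) := integral_const_mul _ _
  have h3 : ∫ t in Ioi (0:ℝ), Real.exp (-t / s) = s := by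
    have h := integral_comp_mul_left_Ioi (fun u => Real.exp (-u)) 0 (b := s⁻¹) (by positivity)
    simp only [mul_zero, smul_eq_mul, inv_inv, integral_exp_neg_Ioi_zero, mul_one] at h
    rw [show (fun t : ℝ => Real.exp (-t / s)) = fun t : ℝ => Real.exp (-(s⁻¹ * t)) from
      funext fun t => by rw [neg_div, div_eq_inv_mul]]
    exact h
  rw [h2, h3]
  field_simp

lemma Kk_integrable_sub_left {s : ℝ} (hs : 0 < s) (x : ℝ) :
    Integrable (fun y => Kk s (x - y)) := (Kk_integrable hs).comp_sub_left x

lemma Kk_integral_sub_left {s : ℝ} (hs : 0 < s) (x : ℝ) :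
    ∫ y, Kk s (x - y) = 1 := by
  rw [integral_sub_left_eq_self (Kk s) volume x]; exact Kk_integral hs

lemma Kk_integral_sub_right {s : ℝ} (hs : 0 < s) (y : ℝ) :
    ∫ x, Kk s (x - y) = 1 := by
  rw [integral_sub_right_eq_self (Kk s) y]; exact Kk_integral hs

lemma core {s : ℝ} (hs : 0 < s) (q r : ℝ → ℝ) (hqc : Continuous q) (hrc : Continuous r)
    (hq2 : Integrable (fun x => q x ^ 2)) (hr2 : Integrable (fun x => r x ^ 2)) :
    Integrable (fun x => r x * ∫ y, Kk s (x - y) * q y) ∧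
    0 ≤ (∫ x, q x ^ 2) / 2 + (∫ x, r x ^ 2) / 2 +
        ∫ x, r x * ∫ y, Kk s (x - y) * q y := by
  have Knn : ∀ t, 0 ≤ Kk s t := Kk_nonneg hs
  have Kc2 : Continuous fun p : ℝ × ℝ => Kk s (p.1 - p.2) :=
    Kk_cont.comp (continuous_fst.sub continuous_snd)
  -- product integrability of the three pieces
  have m1 : AEStronglyMeasurable (fun p : ℝ × ℝ => Kk s (p.1 - p.2) * r p.1 ^ 2)
      ((volume : Measure ℝ).prod volume) :=
    (Kc2.mul ((hrc.comp continuous_fst).pow 2)).aestronglyMeasurable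
  have m3 : AEStronglyMeasurable (fun p : ℝ × ℝ => Kk s (p.1 - p.2) * q p.2 ^ 2)
      ((volume : Measure ℝ).prod volume) :=
    (Kc2.mul ((hqc.comp continuous_snd).pow 2)).aestronglyMeasurable
  have m2 : AEStronglyMeasurable (fun p : ℝ × ℝ => Kk s (p.1 - p.2) * (r p.1 * q p.2))
      ((volume : Measure ℝ).prod volume) :=
    (Kc2.mul ((hrc.comp continuous_fst).mul (hqc.comp continuous_snd))).aestronglyMeasurable
  have hM1 : Integrable (fun p : ℝ × ℝ => Kk s (p.1 - p.2) * r p.1 ^ 2)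
      ((volume : Measure ℝ).prod volume) := by
    rw [integrable_prod_iff m1]
    constructor
    · refine Filter.Eventually.of_forall fun x => ?_
      simpa using (Kk_integrable_sub_left hs x).mul_const (r x ^ 2)
    · refine hr2.congr (Filter.Eventually.of_forall fun x => ?_)
      have h : ∀ y, ‖Kk s (x - y) * r x ^ 2‖ = Kk s (x - y) * r x ^ 2 := fun y =>
        Real.norm_of_nonneg (mul_nonneg (Knn _) (sq_nonneg _))
      simp only [h]
      rw [integral_mul_const, Kk_integral_sub_left hs x, one_mul]
  have hM3 : Integrable (fun p : ℝ × ℝ => Kk s (p.1 - p.2) * q p.2 ^ 2)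
      ((volume : Measure ℝ).prod volume) := by
    rw [integrable_prod_iff' m3]
    constructor
    · refine Filter.Eventually.of_forall fun y => ?_
      simpa using ((Kk_integrable hs).comp_sub_right y).mul_const (q y ^ 2)
    · refine hq2.congr (Filter.Eventually.of_forall fun y => ?_)
      have h : ∀ x, ‖Kk s (x - y) * q y ^ 2‖ = Kk s (x - y) * q y ^ 2 := fun x =>
        Real.norm_of_nonneg (mul_nonneg (Knn _) (sq_nonneg _))
      simp only [h]
      rw [integral_mul_const, Kk_integral_sub_right hs y, one_mul]
  have hM2 : Integrable (fun p : ℝ × ℝ => Kk s (p.1 - p.2) * (r p.1 * q p.2))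
      ((volume : Measure ℝ).prod volume) := by
    refine Integrable.mono' ((hM1.add hM3).const_mul (1/2)) m2
      (Filter.Eventually.of_forall fun p => ?_)
    rw [Real.norm_eq_abs, abs_mul, abs_of_nonneg (Knn _)]
    have h1 : |r p.1 * q p.2| ≤ (r p.1 ^ 2 + q p.2 ^ 2) / 2 := by
      rw [abs_mul]
      nlinarith [sq_nonneg (|r p.1| - |q p.2|), sq_abs (r p.1), sq_abs (q p.2),
        abs_nonneg (r p.1), abs_nonneg (q p.2)]
    have h2 := mul_le_mul_of_nonneg_left h1 (Knn (p.1 - p.2))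
    calc Kk s (p.1 - p.2) * |r p.1 * q p.2|
        ≤ Kk s (p.1 - p.2) * ((r p.1 ^ 2 + q p.2 ^ 2) / 2) := h2
      _ = 1/2 * ((fun p : ℝ × ℝ => Kk s (p.1 - p.2) * r p.1 ^ 2) p
            + (fun p : ℝ × ℝ => Kk s (p.1 - p.2) * q p.2 ^ 2) p) := by simp; ring
  -- inner integrability (for fixed x)
  have i1 : ∀ x : ℝ, Integrable (fun y => Kk s (x - y) * r x ^ 2) := fun x =>
    (Kk_integrable_sub_left hs x).mul_const _
  have i3 : ∀ x : ℝ, Integrable (fun y => Kk s (x - y) * q y ^ 2) := fun x => by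
    refine Integrable.bdd_mul (c := 1 / (2 * s)) hq2
      ((Kk_cont.comp (continuous_const.sub continuous_id)).aestronglyMeasurable) ?_
    exact Filter.Eventually.of_forall fun y => by
      rw [Real.norm_of_nonneg (Knn _)]; exact Kk_le hs _
  have i2 : ∀ x : ℝ, Integrable (fun y => Kk s (x - y) * (r x * q y)) := fun x => by
    refine Integrable.mono' (((i1 x).add (i3 x)).const_mul (1/2))
      (((Kk_cont.comp (continuous_const.sub continuous_id)).mul
        (continuous_const.mul hqc))).aestronglyMeasurable
      (Filter.Eventually.of_forall fun y => ?_)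
    rw [Real.norm_eq_abs, abs_mul, abs_of_nonneg (Knn _)]
    have h1 : |r x * q y| ≤ (r x ^ 2 + q y ^ 2) / 2 := by
      rw [abs_mul]
      nlinarith [sq_nonneg (|r x| - |q y|), sq_abs (r x), sq_abs (q y),
        abs_nonneg (r x), abs_nonneg (q y)]
    have h2 := mul_le_mul_of_nonneg_left h1 (Knn (x - y))
    calc Kk s (x - y) * |r x * q y| ≤ Kk s (x - y) * ((r x ^ 2 + q y ^ 2) / 2) := h2
      _ = 1/2 * ((fun y => Kk s (x - y) * r x ^ 2) y
            + (fun y => Kk s (x - y) * q y ^ 2) y) := by simp; ring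
  -- pulling out r x from the cross term
  have cross : ∀ x : ℝ, ∫ y, Kk s (x - y) * (r x * q y)
      = r x * ∫ y, Kk s (x - y) * q y := fun x =>
    calc ∫ y, Kk s (x - y) * (r x * q y) = ∫ y, r x * (Kk s (x - y) * q y) :=
          integral_congr_ae (Filter.Eventually.of_forall fun y => by ring)
      _ = r x * ∫ y, Kk s (x - y) * q y := integral_const_mul _ _
  -- the inner integral of the square kernel form
  have inner_eq : ∀ x : ℝ,
      ∫ y, Kk s (x - y) * (r x + q y) ^ 2 / 2
        = (1/2) * r x ^ 2 + ((r x * ∫ y, Kk s (x - y) * q y)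
            + (1/2) * ∫ y, Kk s (x - y) * q y ^ 2) := by
    intro x
    have A : Integrable (fun y => (1/2 : ℝ) * (Kk s (x - y) * r x ^ 2)) :=
      (i1 x).const_mul _
    have C : Integrable (fun y => (1/2 : ℝ) * (Kk s (x - y) * q y ^ 2)) :=
      (i3 x).const_mul _
    have BC : Integrable (fun y => Kk s (x - y) * (r x * q y)
        + (1/2 : ℝ) * (Kk s (x - y) * q y ^ 2)) := (i2 x).add C
    have expand : ∫ y, Kk s (x - y) * (r x + q y) ^ 2 / 2
        = ∫ y, ((1/2 : ℝ) * (Kk s (x - y) * r x ^ 2)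
            + (Kk s (x - y) * (r x * q y) + (1/2 : ℝ) * (Kk s (x - y) * q y ^ 2))) :=
      integral_congr_ae (Filter.Eventually.of_forall fun y => by ring)
    rw [expand, integral_add A BC, integral_add (i2 x) C, integral_const_mul,
      integral_const_mul, integral_mul_const, Kk_integral_sub_left hs x, one_mul, cross x]
  -- integrability of x ↦ r x * P x  and  x ↦ Q x
  have Irp : Integrable (fun x => r x * ∫ y, Kk s (x - y) * q y) := by
    refine hM2.integral_prod_left.congr (Filter.Eventually.of_forall fun x => ?_)
    exact cross x
  have IQ : Integrable (fun x => ∫ y, Kk s (x - y) * q y ^ 2) := hM3.integral_prod_left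
  -- ∫ Q = ∫ q²
  have hQint : ∫ x, (∫ y, Kk s (x - y) * q y ^ 2) = ∫ y, q y ^ 2 := by
    rw [integral_integral_swap (f := fun x y => Kk s (x - y) * q y ^ 2) hM3]
    refine integral_congr_ae (Filter.Eventually.of_forall fun y => ?_)
    show ∫ x, Kk s (x - y) * q y ^ 2 = q y ^ 2
    rw [integral_mul_const, Kk_integral_sub_right hs y, one_mul]
  refine ⟨Irp, ?_⟩
  have B' : Integrable (fun x => (r x * ∫ y, Kk s (x - y) * q y)
      + (1/2 : ℝ) * ∫ y, Kk s (x - y) * q y ^ 2) := Irp.add (IQ.const_mul _)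
  have key : (∫ x, q x ^ 2) / 2 + (∫ x, r x ^ 2) / 2 +
        (∫ x, r x * ∫ y, Kk s (x - y) * q y)
      = ∫ x, ∫ y, Kk s (x - y) * (r x + q y) ^ 2 / 2 := by
    have h0 : ∫ x, ∫ y, Kk s (x - y) * (r x + q y) ^ 2 / 2
        = ∫ x, ((1/2 : ℝ) * r x ^ 2 + ((r x * ∫ y, Kk s (x - y) * q y)
            + (1/2 : ℝ) * ∫ y, Kk s (x - y) * q y ^ 2)) :=
      integral_congr_ae (Filter.Eventually.of_forall inner_eq)
    rw [h0, integral_add (hr2.const_mul _) B', integral_add Irp (IQ.const_mul _),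
      integral_const_mul, integral_const_mul, hQint]
    ring
  rw [key]
  refine integral_nonneg fun x => integral_nonneg fun y => ?_
  have := Knn (x - y)
  positivity

/-- For `0 < a < b` and `u = (q,r) ∈ H¹(ℝ)×H¹(ℝ)`,
`∫ (E(u) + F₂(u)) dx ≥ 0`, where `E(u) = ½(q² + r² + a q'² + b r'²)` and
`F₂(u) = r·(B⁻¹A q) + a q' r'`, with `B⁻¹A = (a/b)·I + (1-a/b)·B⁻¹` the Fourier
multiplier of symbol `(1+aξ²)/(1+bξ²)`, `B⁻¹` being convolution with the kernel
`(1/(2√b)) e^{-|x|/√b}`. -/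
theorem energy_plus_flux_nonneg (a b : ℝ) (ha : 0 < a) (hab : a < b)
    (q r q' r' : ℝ → ℝ)
    (hq : ∀ x, HasDerivAt q (q' x) x) (hr : ∀ x, HasDerivAt r (r' x) x)
    (hq2 : MemLp q 2 (volume : Measure ℝ)) (hr2 : MemLp r 2 (volume : Measure ℝ))
    (hq'2 : MemLp q' 2 (volume : Measure ℝ)) (hr'2 : MemLp r' 2 (volume : Measure ℝ)) :
    0 ≤ ∫ x : ℝ,
      ((1 / 2) * ((q x) ^ 2 + (r x) ^ 2 + a * (q' x) ^ 2 + b * (r' x) ^ 2)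
        + (r x * ((a / b) * q x
            + (1 - a / b) * ∫ y : ℝ,
                (1 / (2 * Real.sqrt b)) * Real.exp (-|x - y| / Real.sqrt b) * q y)
          + a * q' x * r' x)) := by
  have hb : 0 < b := ha.trans hab
  have hs : 0 < Real.sqrt b := Real.sqrt_pos.mpr hb
  set s := Real.sqrt b with hsdef
  have hqc : Continuous q := by
    refine continuous_iff_continuousAt.mpr fun x => (hq x).continuousAt
  have hrc : Continuous r := by
    refine continuous_iff_continuousAt.mpr fun x => (hr x).continuousAt
  obtain ⟨Irp, hcore⟩ := core hs q r hqc hrc hq2.integrable_sq hr2.integrable_sq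
  set P : ℝ → ℝ := fun x => ∫ y, Kk s (x - y) * q y with hP
  -- pointwise algebraic identity
  have hgoal : (fun x : ℝ =>
      ((1 / 2) * ((q x) ^ 2 + (r x) ^ 2 + a * (q' x) ^ 2 + b * (r' x) ^ 2)
        + (r x * ((a / b) * q x + (1 - a / b) * ∫ y : ℝ,
                (1 / (2 * s)) * Real.exp (-|x - y| / s) * q y)
          + a * q' x * r' x)))
      = fun x => (a / (2 * b) * (q x + r x) ^ 2
          + (a / 2 * (q' x + r' x) ^ 2 + (b - a) / 2 * r' x ^ 2))
        + (1 - a / b) * (1 / 2 * q x ^ 2 + (1 / 2 * r x ^ 2 + r x * P x)) := by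
    funext x
    show ((1 / 2) * ((q x) ^ 2 + (r x) ^ 2 + a * (q' x) ^ 2 + b * (r' x) ^ 2)
        + (r x * ((a / b) * q x + (1 - a / b) * P x) + a * q' x * r' x)) = _
    field_simp
    ring
  rw [hgoal]
  have IG : Integrable (fun x => a / (2 * b) * (q x + r x) ^ 2
      + (a / 2 * (q' x + r' x) ^ 2 + (b - a) / 2 * r' x ^ 2)) :=
    (((hq2.add hr2).integrable_sq).const_mul _).add
      ((((hq'2.add hr'2).integrable_sq).const_mul _).add
        ((hr'2.integrable_sq).const_mul _))
  have IH0 : Integrable (fun x => 1 / 2 * q x ^ 2 + (1 / 2 * r x ^ 2 + r x * P x)) :=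
    (hq2.integrable_sq.const_mul _).add ((hr2.integrable_sq.const_mul _).add Irp)
  have IH : Integrable (fun x =>
      (1 - a / b) * (1 / 2 * q x ^ 2 + (1 / 2 * r x ^ 2 + r x * P x))) :=
    IH0.const_mul _
  rw [integral_add IG IH]
  have hGnn : 0 ≤ ∫ x, (a / (2 * b) * (q x + r x) ^ 2
      + (a / 2 * (q' x + r' x) ^ 2 + (b - a) / 2 * r' x ^ 2)) := by
    refine integral_nonneg fun x => ?_
    have h1 : 0 ≤ a / (2 * b) := div_nonneg ha.le (by linarith)
    have h2 : 0 ≤ a / 2 := by linarith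
    have h3 : 0 ≤ (b - a) / 2 := by linarith
    have := sq_nonneg (q x + r x); have := sq_nonneg (q' x + r' x); have := sq_nonneg (r' x)
    positivity
  have hHnn : 0 ≤ ∫ x, (1 - a / b) * (1 / 2 * q x ^ 2 + (1 / 2 * r x ^ 2 + r x * P x)) := by
    rw [integral_const_mul]
    have hc : 0 ≤ 1 - a / b := by
      rw [sub_nonneg]
      exact (div_le_one hb).mpr hab.le
    refine mul_nonneg hc ?_
    have J1 : Integrable (fun x => 1 / 2 * q x ^ 2) := hq2.integrable_sq.const_mul _
    have J2 : Integrable (fun x => 1 / 2 * r x ^ 2) := hr2.integrable_sq.const_mul _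
    have J3 : Integrable (fun x => 1 / 2 * r x ^ 2 + r x * P x) := J2.add Irp
    rw [integral_add J1 J3, integral_add J2 Irp, integral_const_mul, integral_const_mul]
    linarith [hcore]
  linarith
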